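/- For the Weyl group W = W(B_n) of type B_n, with positive roots e_i (short, squared length 1, 1 ≤ i ≤ n) and e_i ± e_j (long, squared length 2, 1 ≤ i < j ≤ n), the weighted length generating function satisfies ∑_{w ∈ W} q^{𝓛(w)} = ∏_{i=1}^{n} ((1+q^{2i−1})/(1+q)) · ((q^{2i}−1)/(q−1)), where 𝓛(w) = ∑_{α ∈ inv(w)} ||α||². -/

import Mathlib

/-- The positive roots of type `B_n`: the short roots `e_i` (squared length 1) and
the long roots `e_i − e_j`, `e_i + e_j` for `i < j` (squared length 2). -/
def PhiB (n : ℕ) : Finset (Fin n → ℤ) :=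
  (Finset.univ.image fun i : Fin n => Pi.single i (1 : ℤ)) ∪
  (((Finset.univ ×ˢ Finset.univ : Finset (Fin n × Fin n)).filter fun p => p.1 < p.2).image
      fun p => Pi.single p.1 (1 : ℤ) - Pi.single p.2 (1 : ℤ)) ∪
  (((Finset.univ ×ˢ Finset.univ : Finset (Fin n × Fin n)).filter fun p => p.1 < p.2).image
      fun p => Pi.single p.1 (1 : ℤ) + Pi.single p.2 (1 : ℤ))

/-- The signed permutation matrix with underlying permutation `σ` and signs `ε`;
the map `(σ, ε) ↦ bmat n σ ε` is a bijection onto the hyperoctahedral group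
`W(B_n)` of signed permutation matrices. -/
def bmat (n : ℕ) (σ : Equiv.Perm (Fin n)) (ε : Fin n → Bool) :
    Matrix (Fin n) (Fin n) ℤ := fun i j =>
  if σ j = i then (if ε j then -1 else 1) else 0

/-- The squared length `‖v‖²` of an integer vector. -/
def nsq {n : ℕ} (v : Fin n → ℤ) : ℕ := (∑ i, v i * v i).toNat

/-- `𝓛(w) = ∑_{α ∈ inv(w)} ‖α‖²`, where `inv(w)` is the set of positive roots sent to
negative roots by `w⁻¹`. -/
noncomputable def LB (n : ℕ) (w : Matrix (Fin n) (Fin n) ℤ) : ℕ :=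
  ∑ α ∈ (PhiB n).filter (fun α => -(w⁻¹.mulVec α) ∈ PhiB n), nsq α



open Finset Equiv

variable {n : ℕ}

def sgn (ε : Fin n → Bool) (i : Fin n) : ℤ := if ε i then -1 else 1

lemma binv (σ : Equiv.Perm (Fin n)) (ε : Fin n → Bool) :
    (bmat n σ ε)⁻¹ = Matrix.of fun i j => if σ i = j then sgn ε i else 0 := by
  apply Matrix.inv_eq_left_inv
  ext i k
  simp only [Matrix.mul_apply, bmat, Matrix.one_apply, Matrix.of_apply]
  rw [Finset.sum_eq_single (σ i)]
  · simp only [if_pos rfl]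
    by_cases h : i = k
    · subst h; simp [sgn]; split_ifs <;> ring
    · have : ¬ σ k = σ i := fun hc => h (σ.injective hc).symm
      simp [this, h]
  · intro b _ hb
    simp [Ne.symm hb]
  · simp

lemma binv_mulVec_single (σ : Equiv.Perm (Fin n)) (ε : Fin n → Bool) (a : Fin n) :
    (bmat n σ ε)⁻¹.mulVec (Pi.single a 1) = sgn ε (σ⁻¹ a) • Pi.single (σ⁻¹ a) (1:ℤ) := by
  rw [binv]
  funext i
  simp only [Matrix.mulVec, Matrix.of_apply, Pi.smul_apply, Pi.single_apply, dotProduct,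
    smul_eq_mul]
  rw [Finset.sum_eq_single a]
  · by_cases h : σ i = a
    · have : i = σ⁻¹ a := by simp [← h]
      simp [h, this]
    · have : ¬ i = σ⁻¹ a := by
        intro hc; apply h; rw [hc]; simp
      rw [if_neg h, if_neg this]; simp
  · intro b _ hb; simp [hb]
  · simp

lemma mem_PhiB_iff (x : Fin n → ℤ) : x ∈ PhiB n ↔
    (∃ i, x = Pi.single i 1) ∨
    (∃ i j, i < j ∧ x = Pi.single i 1 - Pi.single j 1) ∨
    (∃ i j, i < j ∧ x = Pi.single i 1 + Pi.single j 1) := by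
  simp only [PhiB, Finset.mem_union, Finset.mem_image, Finset.mem_filter, Finset.mem_univ,
    true_and, Finset.mem_product, Prod.exists, eq_comm]
  aesop

lemma single_mem_PhiB (a : Fin n) : Pi.single a (1:ℤ) ∈ PhiB n :=
  (mem_PhiB_iff _).2 (Or.inl ⟨a, rfl⟩)

lemma neg_single_not_mem_PhiB (a : Fin n) : -Pi.single a (1:ℤ) ∉ PhiB n := by
  intro h
  rw [mem_PhiB_iff] at h
  rcases h with ⟨i, hi⟩ | ⟨i, j, hij, hi⟩ | ⟨i, j, hij, hi⟩ <;>
  · have h1 := congrFun hi a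
    have h2 := congrFun hi i
    simp only [Pi.neg_apply, Pi.single_apply, Pi.sub_apply, Pi.add_apply, Fin.ext_iff] at h1 h2
    split_ifs at h1 h2 <;> omega

lemma two_mem_PhiB_iff {a b : Fin n} (hab : a < b) (u v : ℤ)
    (hu : u = 1 ∨ u = -1) (hv : v = 1 ∨ v = -1) :
    u • Pi.single a (1:ℤ) + v • Pi.single b 1 ∈ PhiB n ↔ u = 1 := by
  have hne : a ≠ b := hab.ne
  constructor
  · intro hx
    rcases hu with rfl | rfl
    · rfl
    exfalso
    rw [mem_PhiB_iff] at hx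
    have hab' : (a:ℕ) < b := hab
    rcases hx with ⟨i, hi⟩ | ⟨i, j, hij, hi⟩ | ⟨i, j, hij, hi⟩ <;>
    · try have hij' : (i:ℕ) < j := hij
      have h1 := congrFun hi a
      have h2 := congrFun hi b
      rcases hv with rfl | rfl <;>
      · simp only [Pi.add_apply, Pi.smul_apply, smul_eq_mul, Pi.single_apply, Pi.sub_apply,
          mul_ite, mul_one, mul_zero, Fin.ext_iff] at h1 h2
        split_ifs at h1 h2 <;> omega
  · rintro rfl
    rw [one_smul, mem_PhiB_iff]
    rcases hv with rfl | rfl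
    · exact Or.inr (Or.inr ⟨a, b, hab, by rw [one_smul]⟩)
    · exact Or.inr (Or.inl ⟨a, b, hab, by rw [neg_one_smul, sub_eq_add_neg]⟩)

def cst (i : Fin n) (τ : Equiv.Perm (Fin n)) : ℕ :=
  (Finset.univ.filter fun j => i < j ∧ τ j < τ i).card
def dst (i : Fin n) (τ : Equiv.Perm (Fin n)) : ℕ :=
  (Finset.univ.filter fun j => i < j ∧ τ i < τ j).card

lemma sgn_cases (ε : Fin n → Bool) (i : Fin n) : sgn ε i = 1 ∨ sgn ε i = -1 := by
  unfold sgn; split_ifs <;> simp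

lemma nsq_single (a : Fin n) : nsq (Pi.single a (1:ℤ)) = 1 := by
  unfold nsq
  rw [show (∑ i, (Pi.single a 1 : Fin n → ℤ) i * (Pi.single a 1 : Fin n → ℤ) i) = 1 by
    simp [Pi.single_apply]]
  rfl

lemma nsq_two {a b : Fin n} (h : a ≠ b) (u v : ℤ)
    (hu : u = 1 ∨ u = -1) (hv : v = 1 ∨ v = -1) :
    nsq (u • Pi.single a (1:ℤ) + v • Pi.single b 1) = 2 := by
  unfold nsq
  have key : ∀ i, (u • (Pi.single a 1 : Fin n → ℤ) + v • (Pi.single b 1 : Fin n → ℤ)) i *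
      (u • (Pi.single a 1 : Fin n → ℤ) + v • (Pi.single b 1 : Fin n → ℤ)) i
      = (if i = a then 1 else 0) + (if i = b then 1 else 0) := by
    intro i
    rcases hu with rfl | rfl <;> rcases hv with rfl | rfl <;>
      simp only [Pi.add_apply, Pi.smul_apply, smul_eq_mul, Pi.single_apply, one_mul, neg_mul,
        mul_ite, mul_one, mul_zero] <;> split_ifs with h1 h2 <;>
      first
        | (exfalso; exact h (h1 ▸ h2 ▸ rfl))
        | ring
  rw [Finset.sum_congr rfl fun i _ => key i, Finset.sum_add_distrib]
  simp
lemma nsq_sub {a b : Fin n} (h : a ≠ b) :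
    nsq (Pi.single a (1:ℤ) - Pi.single b 1) = 2 := by
  have := nsq_two h 1 (-1) (Or.inl rfl) (Or.inr rfl)
  rw [one_smul, neg_one_smul, ← sub_eq_add_neg] at this
  exact this
lemma nsq_add {a b : Fin n} (h : a ≠ b) :
    nsq (Pi.single a (1:ℤ) + Pi.single b 1) = 2 := by
  have := nsq_two h 1 1 (Or.inl rfl) (Or.inl rfl)
  rw [one_smul, one_smul] at this
  exact this

lemma neg_smul_sub' (s t : ℤ) (A B : Fin n → ℤ) : -(s•A - t•B) = (-s)•A + t•B := by
  ext k; simp; ring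
lemma neg_smul_add' (s t : ℤ) (A B : Fin n → ℤ) : -(s•A + t•B) = (-s)•A + (-t)•B := by
  ext k; simp; ring

lemma neg_sgn_cases (ε : Fin n → Bool) (i : Fin n) : -sgn ε i = 1 ∨ -sgn ε i = -1 := by
  unfold sgn; split_ifs <;> simp

lemma LB_bmat (σ : Equiv.Perm (Fin n)) (ε : Fin n → Bool) :
    LB n (bmat n σ ε) =
      ∑ i, ((if ε (σ⁻¹ i) then 1 + 4 * dst i σ⁻¹ else 0) + 2 * cst i σ⁻¹) := by
  classical
  unfold LB
  set Pr : (Fin n → ℤ) → Prop := fun α => -((bmat n σ ε)⁻¹.mulVec α) ∈ PhiB n with hPr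
  have hshort : ∀ a : Fin n, Pr (Pi.single a 1) ↔ ε (σ⁻¹ a) = true := by
    intro a
    rw [hPr]
    simp only
    rw [binv_mulVec_single]
    cases h : ε (σ⁻¹ a)
    · simp only [sgn, h]; simp [neg_single_not_mem_PhiB]
    · simp only [sgn, h]; simp [single_mem_PhiB]
  have hpair : ∀ p : Fin n × Fin n, p.1 < p.2 →
      ((if Pr (Pi.single p.1 1 - Pi.single p.2 1) then 2 else 0)
      + (if Pr (Pi.single p.1 1 + Pi.single p.2 1) then 2 else 0) : ℕ)
      = if σ⁻¹ p.1 < σ⁻¹ p.2 then (if ε (σ⁻¹ p.1) then 4 else 0) else 2 := by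
    rintro ⟨i, j⟩ hp
    simp only at hp ⊢
    have hij : i ≠ j := hp.ne
    have hab : σ⁻¹ i ≠ σ⁻¹ j := fun hc => hij ((σ⁻¹).injective hc)
    have hvecD : -((bmat n σ ε)⁻¹.mulVec (Pi.single i 1 - Pi.single j 1))
        = (-(sgn ε (σ⁻¹ i))) • (Pi.single (σ⁻¹ i) 1 : Fin n → ℤ)
          + (sgn ε (σ⁻¹ j)) • (Pi.single (σ⁻¹ j) 1 : Fin n → ℤ) := by
      rw [Matrix.mulVec_sub, binv_mulVec_single, binv_mulVec_single, neg_smul_sub']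
    have hvecS : -((bmat n σ ε)⁻¹.mulVec (Pi.single i 1 + Pi.single j 1))
        = (-(sgn ε (σ⁻¹ i))) • (Pi.single (σ⁻¹ i) 1 : Fin n → ℤ)
          + (-(sgn ε (σ⁻¹ j))) • (Pi.single (σ⁻¹ j) 1 : Fin n → ℤ) := by
      rw [Matrix.mulVec_add, binv_mulVec_single, binv_mulVec_single, neg_smul_add']
    have hD0 : Pr (Pi.single i 1 - Pi.single j 1) ↔
        ((-(sgn ε (σ⁻¹ i))) • (Pi.single (σ⁻¹ i) 1 : Fin n → ℤ)
          + (sgn ε (σ⁻¹ j)) • (Pi.single (σ⁻¹ j) 1 : Fin n → ℤ) ∈ PhiB n) := by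
      rw [hPr]; simp only; rw [hvecD]
    have hS0 : Pr (Pi.single i 1 + Pi.single j 1) ↔
        ((-(sgn ε (σ⁻¹ i))) • (Pi.single (σ⁻¹ i) 1 : Fin n → ℤ)
          + (-(sgn ε (σ⁻¹ j))) • (Pi.single (σ⁻¹ j) 1 : Fin n → ℤ) ∈ PhiB n) := by
      rw [hPr]; simp only; rw [hvecS]
    rcases lt_or_gt_of_ne hab with h | h
    · rw [if_pos h]
      have e1 := hD0.trans (two_mem_PhiB_iff h (-(sgn ε (σ⁻¹ i))) (sgn ε (σ⁻¹ j))
        (neg_sgn_cases ε (σ⁻¹ i)) (sgn_cases ε (σ⁻¹ j)))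
      have e2 := hS0.trans (two_mem_PhiB_iff h (-(sgn ε (σ⁻¹ i))) (-(sgn ε (σ⁻¹ j)))
        (neg_sgn_cases ε (σ⁻¹ i)) (neg_sgn_cases ε (σ⁻¹ j)))
      rw [if_congr e1 rfl rfl, if_congr e2 rfl rfl]
      cases hε : ε (σ⁻¹ i) <;> simp only [sgn, hε] <;> simp
    · rw [if_neg (asymm h)]
      have e1 := hD0.trans ((by rw [add_comm] :
          ((-(sgn ε (σ⁻¹ i))) • (Pi.single (σ⁻¹ i) 1 : Fin n → ℤ)
          + (sgn ε (σ⁻¹ j)) • (Pi.single (σ⁻¹ j) 1 : Fin n → ℤ) ∈ PhiB n) ↔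
          ((sgn ε (σ⁻¹ j)) • (Pi.single (σ⁻¹ j) 1 : Fin n → ℤ)
          + (-(sgn ε (σ⁻¹ i))) • (Pi.single (σ⁻¹ i) 1 : Fin n → ℤ) ∈ PhiB n)).trans
        (two_mem_PhiB_iff h (sgn ε (σ⁻¹ j)) (-(sgn ε (σ⁻¹ i)))
          (sgn_cases ε (σ⁻¹ j)) (neg_sgn_cases ε (σ⁻¹ i))))
      have e2 := hS0.trans ((by rw [add_comm] :
          ((-(sgn ε (σ⁻¹ i))) • (Pi.single (σ⁻¹ i) 1 : Fin n → ℤ)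
          + (-(sgn ε (σ⁻¹ j))) • (Pi.single (σ⁻¹ j) 1 : Fin n → ℤ) ∈ PhiB n) ↔
          ((-(sgn ε (σ⁻¹ j))) • (Pi.single (σ⁻¹ j) 1 : Fin n → ℤ)
          + (-(sgn ε (σ⁻¹ i))) • (Pi.single (σ⁻¹ i) 1 : Fin n → ℤ) ∈ PhiB n)).trans
        (two_mem_PhiB_iff h (-(sgn ε (σ⁻¹ j))) (-(sgn ε (σ⁻¹ i)))
          (neg_sgn_cases ε (σ⁻¹ j)) (neg_sgn_cases ε (σ⁻¹ i))))
      rw [if_congr e1 rfl rfl, if_congr e2 rfl rfl]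
      cases hε : ε (σ⁻¹ j) <;> simp only [sgn, hε] <;> simp
  -- decompose the sum
  set t : Finset (Fin n × Fin n) := (Finset.univ ×ˢ Finset.univ).filter (fun p => p.1 < p.2)
    with ht
  set fA : Fin n → (Fin n → ℤ) := fun i => Pi.single i 1 with hfA
  set fB : Fin n × Fin n → (Fin n → ℤ) := fun p => Pi.single p.1 1 - Pi.single p.2 1 with hfB
  set fC : Fin n × Fin n → (Fin n → ℤ) := fun p => Pi.single p.1 1 + Pi.single p.2 1 with hfC
  have dAB : Disjoint (Finset.univ.image fA) (t.image fB) := by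
    rw [Finset.disjoint_left]
    rintro x hx hx'
    obtain ⟨i, -, rfl⟩ := Finset.mem_image.mp hx
    obtain ⟨p, hp, hpx⟩ := Finset.mem_image.mp hx'
    have hplt : (p.1 : ℕ) < p.2 := (Finset.mem_filter.mp hp).2
    have h1 := congrFun hpx p.2
    simp only [hfA, hfB, Pi.sub_apply, Pi.single_apply, Fin.ext_iff] at h1
    split_ifs at h1 <;> omega
  have dAC : Disjoint (Finset.univ.image fA) (t.image fC) := by
    rw [Finset.disjoint_left]
    rintro x hx hx'
    obtain ⟨i, -, rfl⟩ := Finset.mem_image.mp hx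
    obtain ⟨p, hp, hpx⟩ := Finset.mem_image.mp hx'
    have hplt : (p.1 : ℕ) < p.2 := (Finset.mem_filter.mp hp).2
    have h1 := congrFun hpx p.1
    have h2 := congrFun hpx p.2
    simp only [hfA, hfC, Pi.add_apply, Pi.single_apply, Fin.ext_iff] at h1 h2
    split_ifs at h1 h2 <;> omega
  have dBC : Disjoint (t.image fB) (t.image fC) := by
    rw [Finset.disjoint_left]
    rintro x hx hx'
    obtain ⟨p, hp, rfl⟩ := Finset.mem_image.mp hx
    obtain ⟨r, hr, hrx⟩ := Finset.mem_image.mp hx'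
    have hplt : (p.1 : ℕ) < p.2 := (Finset.mem_filter.mp hp).2
    have hrlt : (r.1 : ℕ) < r.2 := (Finset.mem_filter.mp hr).2
    have h1 := congrFun hrx p.2
    simp only [hfB, hfC, Pi.add_apply, Pi.sub_apply, Pi.single_apply, Fin.ext_iff] at h1
    split_ifs at h1 <;> omega
  have hPhi : PhiB n = (Finset.univ.image fA ∪ t.image fB) ∪ t.image fC := rfl
  have injB : ∀ x ∈ t, ∀ y ∈ t, fB x = fB y → x = y := by
    intro x hx y hy hxy
    have hxlt : (x.1 : ℕ) < x.2 := (Finset.mem_filter.mp hx).2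
    have hylt : (y.1 : ℕ) < y.2 := (Finset.mem_filter.mp hy).2
    have h1 := congrFun hxy x.1
    have h2 := congrFun hxy x.2
    simp only [hfB, Pi.sub_apply, Pi.single_apply, Fin.ext_iff] at h1 h2
    have : (x.1:ℕ) = y.1 ∧ (x.2:ℕ) = y.2 := by split_ifs at h1 h2 <;> omega
    exact Prod.ext (Fin.ext this.1) (Fin.ext this.2)
  have injC : ∀ x ∈ t, ∀ y ∈ t, fC x = fC y → x = y := by
    intro x hx y hy hxy
    have hxlt : (x.1 : ℕ) < x.2 := (Finset.mem_filter.mp hx).2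
    have hylt : (y.1 : ℕ) < y.2 := (Finset.mem_filter.mp hy).2
    have h1 := congrFun hxy x.1
    have h2 := congrFun hxy x.2
    simp only [hfC, Pi.add_apply, Pi.single_apply, Fin.ext_iff] at h1 h2
    have : (x.1:ℕ) = y.1 ∧ (x.2:ℕ) = y.2 := by split_ifs at h1 h2 <;> omega
    exact Prod.ext (Fin.ext this.1) (Fin.ext this.2)
  have injA : ∀ x : Fin n, ∀ y : Fin n, fA x = fA y → x = y := by
    intro x y hxy
    have h1 := congrFun hxy x
    simp only [hfA, Pi.single_apply, Fin.ext_iff] at h1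
    have : (x:ℕ) = y := by split_ifs at h1 <;> omega
    exact Fin.ext this
  have SA : ∑ x ∈ Finset.univ.filter (fun a => Pr (fA a)), nsq (fA x)
      = ∑ i, (if ε (σ⁻¹ i) then 1 else 0) := by
    rw [Finset.sum_filter]
    refine Finset.sum_congr rfl fun i _ => ?_
    rw [hfA]; simp only
    rw [nsq_single, if_congr (hshort i) rfl rfl]
  have SBC : ((∑ x ∈ t.filter (fun a => Pr (fB a)), nsq (fB x))
      + ∑ x ∈ t.filter (fun a => Pr (fC a)), nsq (fC x))
      = ∑ i, ((if ε (σ⁻¹ i) then 4 else 0) * dst i σ⁻¹ + 2 * cst i σ⁻¹) := by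
    have hB : ∑ x ∈ t.filter (fun a => Pr (fB a)), nsq (fB x)
        = ∑ p ∈ t, if Pr (fB p) then nsq (fB p) else 0 := Finset.sum_filter _ _
    have hC : ∑ x ∈ t.filter (fun a => Pr (fC a)), nsq (fC x)
        = ∑ p ∈ t, if Pr (fC p) then nsq (fC p) else 0 := Finset.sum_filter _ _
    rw [hB, hC, ← Finset.sum_add_distrib]
    have step1 : ∀ p ∈ t, ((if Pr (fB p) then nsq (fB p) else 0)
        + (if Pr (fC p) then nsq (fC p) else 0))
        = if σ⁻¹ p.1 < σ⁻¹ p.2 then (if ε (σ⁻¹ p.1) then 4 else 0) else 2 := by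
      intro p hp
      have hplt : p.1 < p.2 := (Finset.mem_filter.mp hp).2
      have hne : p.1 ≠ p.2 := hplt.ne
      rw [hfB, hfC]; simp only
      rw [nsq_sub hne, nsq_add hne]
      exact hpair p hplt
    rw [Finset.sum_congr rfl step1, ht, Finset.sum_filter, Finset.sum_product]
    refine Finset.sum_congr rfl fun i _ => ?_
    have hptw : ∀ j : Fin n, (if i < j then
        (if σ⁻¹ i < σ⁻¹ j then (if ε (σ⁻¹ i) then 4 else 0) else 2) else 0)
        = (if ε (σ⁻¹ i) then 4 else 0) * (if i < j ∧ σ⁻¹ i < σ⁻¹ j then 1 else 0)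
          + 2 * (if i < j ∧ σ⁻¹ j < σ⁻¹ i then 1 else 0) := by
      intro j
      by_cases h1 : i < j
      · have hne : σ⁻¹ i ≠ σ⁻¹ j := fun hc => h1.ne ((σ⁻¹).injective hc)
        by_cases h2 : σ⁻¹ i < σ⁻¹ j
        · rw [if_pos h1, if_pos h2, if_pos (show i < j ∧ σ⁻¹ i < σ⁻¹ j from ⟨h1, h2⟩),
            if_neg (show ¬(i < j ∧ σ⁻¹ j < σ⁻¹ i) from fun h => asymm h2 h.2)]; simp
        · have h3 : σ⁻¹ j < σ⁻¹ i := lt_of_le_of_ne (not_lt.mp h2) (Ne.symm hne)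
          rw [if_pos h1, if_neg h2, if_neg (show ¬(i < j ∧ σ⁻¹ i < σ⁻¹ j) from fun h => h2 h.2),
            if_pos (show i < j ∧ σ⁻¹ j < σ⁻¹ i from ⟨h1, h3⟩)]; simp
      · simp [h1]
    rw [Finset.sum_congr rfl fun j _ => hptw j, Finset.sum_add_distrib,
        ← Finset.mul_sum, ← Finset.mul_sum, ← Finset.sum_filter, ← Finset.sum_filter,
        Finset.sum_const, Finset.sum_const, smul_eq_mul, smul_eq_mul, mul_one, mul_one]
    rfl
  have final : (∑ x ∈ Finset.univ.filter (fun a => Pr (fA a)), nsq (fA x)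
      + ∑ x ∈ t.filter (fun a => Pr (fB a)), nsq (fB x))
      + ∑ x ∈ t.filter (fun a => Pr (fC a)), nsq (fC x)
      = ∑ i, ((if ε (σ⁻¹ i) then 1 + 4 * dst i σ⁻¹ else 0) + 2 * cst i σ⁻¹) := by
    rw [add_assoc, SA, SBC, ← Finset.sum_add_distrib]
    refine Finset.sum_congr rfl fun i _ => ?_
    cases hε : ε (σ⁻¹ i) <;> simp [hε] <;> ring
  rw [hPhi, Finset.filter_union, Finset.filter_union,
    Finset.sum_union (Finset.disjoint_union_left.mpr
      ⟨Finset.disjoint_filter_filter dAC, Finset.disjoint_filter_filter dBC⟩),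
    Finset.sum_union (Finset.disjoint_filter_filter dAB),
    Finset.filter_image, Finset.filter_image, Finset.filter_image,
    Finset.sum_image (fun x _ y _ h => injA x y h),
    Finset.sum_image (fun x hx y hy h =>
      injB x (Finset.mem_filter.mp hx).1 y (Finset.mem_filter.mp hy).1 h),
    Finset.sum_image (fun x hx y hy h =>
      injC x (Finset.mem_filter.mp hx).1 y (Finset.mem_filter.mp hy).1 h)]
  exact final

def permSplit (n : ℕ) : Equiv.Perm (Fin (n+1)) ≃ Fin (n+1) × Equiv.Perm (Fin n) where
  toFun τ := (τ 0,
    Equiv.removeNone ((finSuccEquiv n).symm.trans (τ.trans (finSuccEquiv' (τ 0)))))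
  invFun pe := (finSuccEquiv n).trans ((pe.2.optionCongr).trans (finSuccEquiv' pe.1).symm)
  left_inv τ := by
    apply Equiv.ext
    intro x
    induction x using Fin.cases with
    | zero => simp
    | succ j =>
      simp only [Equiv.trans_apply, finSuccEquiv_succ, Equiv.optionCongr_apply, Option.map_some]
      have hex : ∃ y, ((finSuccEquiv n).symm.trans (τ.trans (finSuccEquiv' (τ 0)))) (some j)
          = some y := by
        have hne : τ j.succ ≠ τ 0 := fun hc => (Fin.succ_ne_zero j) (τ.injective hc)
        obtain ⟨z, hz⟩ := Fin.exists_succAbove_eq hne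
        exact ⟨z, by simp [← hz, finSuccEquiv'_succAbove]⟩
      have h := Equiv.removeNone_some _ hex
      have h2 : (finSuccEquiv' (τ 0)).symm
          (((finSuccEquiv n).symm.trans (τ.trans (finSuccEquiv' (τ 0)))) (some j)) = τ j.succ := by
        simp
      rw [← h] at h2
      rw [finSuccEquiv'_symm_some] at h2
      exact h2
  right_inv := by
    rintro ⟨p, e⟩
    have happ0 : ((finSuccEquiv n).trans ((e.optionCongr).trans (finSuccEquiv' p).symm)) 0 = p := by
      simp
    refine Prod.ext happ0 ?_
    apply Equiv.ext
    intro j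
    simp only
    have hsome : (((finSuccEquiv n).symm.trans
        ((((finSuccEquiv n).trans ((e.optionCongr).trans (finSuccEquiv' p).symm))).trans
          (finSuccEquiv' ((((finSuccEquiv n).trans ((e.optionCongr).trans
            (finSuccEquiv' p).symm))) 0)))) : Option (Fin n) ≃ Option (Fin n)) (some j)
        = some (e j) := by
      rw [happ0]
      simp [finSuccEquiv'_succAbove]
    have h := Equiv.removeNone_some _ ⟨e j, hsome⟩
    rw [hsome] at h
    exact Option.some_injective _ h

lemma permSplit_symm_zero (p : Fin (n+1)) (e : Equiv.Perm (Fin n)) :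
    (permSplit n).symm (p, e) 0 = p := by
  simp [permSplit]

lemma permSplit_symm_succ (p : Fin (n+1)) (e : Equiv.Perm (Fin n)) (j : Fin n) :
    (permSplit n).symm (p, e) j.succ = p.succAbove (e j) := by
  simp [permSplit, finSuccEquiv'_symm_some]

lemma succAbove_lt_self_iff (p : Fin (n+1)) (y : Fin n) : p.succAbove y < p ↔ (y:ℕ) < p := by
  rw [Fin.succAbove_lt_iff_castSucc_lt]
  simp [Fin.lt_def]

lemma range_filter_lt (k m : ℕ) (h : k ≤ m) :
    (Finset.range m).filter (fun x => x < k) = Finset.range k := by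
  ext x; simp; omega

lemma cst_zero (p : Fin (n+1)) (e : Equiv.Perm (Fin n)) :
    cst 0 ((permSplit n).symm (p, e)) = (p : ℕ) := by
  unfold cst
  rw [Finset.card_filter, Fin.sum_univ_succ]
  rw [permSplit_symm_zero]
  simp only [lt_self_iff_false, false_and, if_false, zero_add]
  have h1 : ∀ j : Fin n, (if 0 < j.succ ∧ (permSplit n).symm (p, e) j.succ < p then 1 else 0)
      = (if ((e j : Fin n) :ℕ) < p then (1:ℕ) else 0) := by
    intro j
    rw [permSplit_symm_succ]
    simp [Fin.succ_pos, succAbove_lt_self_iff]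
  rw [Finset.sum_congr rfl fun j _ => h1 j]
  rw [Fintype.sum_equiv e (g := fun y : Fin n => if (y:ℕ) < p then (1:ℕ) else 0) _ (fun x => rfl)]
  rw [Fin.sum_univ_eq_sum_range (fun k => if k < (p:ℕ) then (1:ℕ) else 0) n]
  rw [← Finset.card_filter, range_filter_lt _ _ p.is_le, Finset.card_range]

lemma cst_succ (p : Fin (n+1)) (e : Equiv.Perm (Fin n)) (i : Fin n) :
    cst i.succ ((permSplit n).symm (p, e)) = cst i e := by
  unfold cst
  rw [Finset.card_filter, Fin.sum_univ_succ, Finset.card_filter]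
  have h0 : (if (i.succ < (0:Fin (n+1)) ∧ (permSplit n).symm (p, e) 0 <
      (permSplit n).symm (p, e) i.succ) then (1:ℕ) else 0) = 0 := by
    simp [Fin.not_lt_zero]
  rw [h0, zero_add]
  refine Finset.sum_congr rfl fun j _ => ?_
  rw [permSplit_symm_succ, permSplit_symm_succ]
  simp [Fin.succ_lt_succ_iff, Fin.succAbove_lt_succAbove_iff]

lemma code_sum : ∀ (n : ℕ) (g : Fin n → ℕ → ℚ),
    ∑ τ : Equiv.Perm (Fin n), ∏ i, g i (cst i τ)
      = ∏ i : Fin n, ∑ c ∈ Finset.range (n - (i:ℕ)), g i c := by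
  intro n
  induction n with
  | zero =>
    intro g
    have h1 : ∀ τ : Equiv.Perm (Fin 0), ∏ i, g i (cst i τ) = 1 :=
      fun τ => Finset.prod_of_isEmpty _
    rw [Finset.sum_congr rfl fun τ _ => h1 τ, Finset.sum_const, Finset.card_univ]
    simp [Finset.prod_of_isEmpty, Fintype.card_perm]
  | succ n IH =>
    intro g
    rw [← Equiv.sum_comp (permSplit n).symm (fun τ => ∏ i, g i (cst i τ)),
        Fintype.sum_prod_type]
    have key : ∀ (p : Fin (n+1)) (e : Equiv.Perm (Fin n)),
        (∏ i, g i (cst i ((permSplit n).symm (p, e))))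
        = g 0 (p:ℕ) * ∏ i : Fin n, g i.succ (cst i e) := by
      intro p e
      rw [Fin.prod_univ_succ, cst_zero]
      congr 1
      exact Finset.prod_congr rfl fun i _ => by rw [cst_succ]
    calc ∑ p : Fin (n+1), ∑ e : Equiv.Perm (Fin n), ∏ i, g i (cst i ((permSplit n).symm (p, e)))
        = ∑ p : Fin (n+1), ∑ e : Equiv.Perm (Fin n), g 0 (p:ℕ) * ∏ i : Fin n, g i.succ (cst i e) := by
          refine Finset.sum_congr rfl fun p _ => Finset.sum_congr rfl fun e _ => key p e
      _ = (∑ p : Fin (n+1), g 0 (p:ℕ)) * ∑ e : Equiv.Perm (Fin n), ∏ i : Fin n, g i.succ (cst i e) := by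
          rw [Finset.sum_mul]
          exact Finset.sum_congr rfl fun p _ => by rw [Finset.mul_sum]
      _ = (∑ c ∈ Finset.range (n+1), g 0 c) * ∏ i : Fin n, ∑ c ∈ Finset.range (n - (i:ℕ)), g i.succ c := by
          rw [IH (fun i c => g i.succ c), Fin.sum_univ_eq_sum_range (fun k => g 0 k) (n+1)]
      _ = ∏ i : Fin (n+1), ∑ c ∈ Finset.range (n + 1 - (i:ℕ)), g i c := by
          rw [Fin.prod_univ_succ]
          simp only [Fin.val_zero, Nat.sub_zero, Fin.val_succ]
          congr 1
          exact (Finset.prod_congr rfl fun i _ => by rw [Nat.succ_sub_succ]).symm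

lemma cst_add_dst (i : Fin n) (τ : Equiv.Perm (Fin n)) :
    cst i τ + dst i τ = n - 1 - (i:ℕ) := by
  unfold cst dst
  rw [← Finset.card_union_of_disjoint]
  · have hu : ((Finset.univ.filter fun j => i < j ∧ τ j < τ i)
        ∪ (Finset.univ.filter fun j => i < j ∧ τ i < τ j))
        = Finset.univ.filter fun j => i < j := by
      ext j
      simp only [Finset.mem_union, Finset.mem_filter, Finset.mem_univ, true_and]
      constructor
      · rintro (⟨h, -⟩ | ⟨h, -⟩) <;> exact h
      · intro h
        have hne : τ j ≠ τ i := fun hc => h.ne' (τ.injective hc)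
        rcases lt_or_gt_of_ne hne with h2 | h2
        · exact Or.inl ⟨h, h2⟩
        · exact Or.inr ⟨h, h2⟩
    rw [hu, Finset.card_filter]
    have hpt : ∀ j : Fin n, (if i < j then (1:ℕ) else 0) = if (i:ℕ) < (j:ℕ) then 1 else 0 :=
      fun j => by rw [if_congr (Fin.lt_iff_val_lt_val) rfl rfl]
    rw [Finset.sum_congr rfl fun j _ => hpt j,
      Fin.sum_univ_eq_sum_range (fun k => if (i:ℕ) < k then 1 else 0) n, ← Finset.card_filter]
    have : (Finset.range n).filter (fun k => (i:ℕ) < k) = Finset.Ico ((i:ℕ)+1) n := by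
      ext k; simp [Finset.mem_Ico]; omega
    rw [this, Nat.card_Ico]
    omega
  · rw [Finset.disjoint_left]
    intro j hj hj'
    have h1 := (Finset.mem_filter.mp hj).2.2
    have h2 := (Finset.mem_filter.mp hj').2.2
    exact absurd h1 (asymm h2)


/-- For the Weyl group `W(B_n)`:
`∑_{w ∈ W} q^{𝓛(w)} = ∏_{i=1}^{n} ((1+q^{2i−1})/(1+q))·((q^{2i}−1)/(q−1))`. -/
theorem stmt7 (n : ℕ) (hn : 1 ≤ n) (q : ℚ) (h1 : q ≠ 1) (h2 : q ≠ -1) :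
    ∑ σ : Equiv.Perm (Fin n), ∑ ε : Fin n → Bool, q ^ LB n (bmat n σ ε)
      = ∏ i ∈ Finset.Icc 1 n,
          ((1 + q ^ (2 * i - 1)) / (1 + q)) * ((q ^ (2 * i) - 1) / (q - 1)) := by
  classical
  have hq2 : q ^ 2 ≠ 1 := by
    intro hc
    have hz : (q - 1) * (q + 1) = 0 := by linear_combination hc
    rcases mul_eq_zero.mp hz with h | h
    · exact h1 (by linarith)
    · exact h2 (by linarith)
  have hq1 : q - 1 ≠ 0 := fun h => h1 (by linarith)
  have hq1' : (1:ℚ) + q ≠ 0 := fun h => h2 (by linarith)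
  have hq2' : q^2 - 1 ≠ 0 := fun h => hq2 (by linarith)
  set gf : ℕ → ℕ → ℚ := fun m c => q ^ ((1 + 4*(m - c)) + 2*c) + q ^ (2*c) with hgf
  have inner : ∀ σ : Equiv.Perm (Fin n),
      (∑ ε : Fin n → Bool, q ^ LB n (bmat n σ ε))
      = ∏ i : Fin n, gf (n - 1 - (i:ℕ)) (cst i σ⁻¹) := by
    intro σ
    have r1 : ∀ ε : Fin n → Bool, q ^ LB n (bmat n σ ε)
        = ∏ i, q ^ ((if ε (σ⁻¹ i) then 1 + 4 * dst i σ⁻¹ else 0) + 2 * cst i σ⁻¹) := by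
      intro ε
      rw [LB_bmat σ ε, ← Finset.prod_pow_eq_pow_sum]
    rw [Finset.sum_congr rfl fun ε _ => r1 ε]
    rw [Fintype.sum_equiv (Equiv.arrowCongr σ (Equiv.refl Bool))
      (fun ε => ∏ i, q ^ ((if ε (σ⁻¹ i) then 1 + 4 * dst i σ⁻¹ else 0) + 2 * cst i σ⁻¹))
      (fun η => ∏ i, q ^ ((if η i then 1 + 4 * dst i σ⁻¹ else 0) + 2 * cst i σ⁻¹))
      (fun ε => rfl)]
    rw [← Fintype.piFinset_univ]
    rw [← Finset.prod_univ_sum (fun _ => (Finset.univ : Finset Bool))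
        (fun i b => q ^ ((if b then 1 + 4 * dst i σ⁻¹ else 0) + 2 * cst i σ⁻¹))]
    refine Finset.prod_congr rfl fun i _ => ?_
    rw [Fintype.sum_bool]
    have hd : dst i σ⁻¹ = n - 1 - (i:ℕ) - cst i σ⁻¹ := by
      have := cst_add_dst i σ⁻¹; omega
    rw [hd, hgf]
    norm_num
  rw [Finset.sum_congr rfl fun σ _ => inner σ]
  rw [Fintype.sum_equiv (Equiv.inv (Equiv.Perm (Fin n)))
    (fun σ : Equiv.Perm (Fin n) => ∏ i : Fin n, gf (n - 1 - (i:ℕ)) (cst i σ⁻¹))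
    (fun τ : Equiv.Perm (Fin n) => ∏ i : Fin n, gf (n - 1 - (i:ℕ)) (cst i τ))
    (fun σ => rfl)]
  rw [code_sum n (fun i c => gf (n - 1 - (i:ℕ)) c)]
  rw [Fin.prod_univ_eq_prod_range (fun k => ∑ c ∈ Finset.range (n - k), gf (n - 1 - k) c) n]
  have step2 : ∀ k ∈ Finset.range n, (∑ c ∈ Finset.range (n - k), gf (n - 1 - k) c)
      = ∑ c ∈ Finset.range ((n - 1 - k) + 1), gf (n - 1 - k) c := by
    intro k hk
    have : n - k = (n - 1 - k) + 1 := by simp at hk; omega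
    rw [this]
  rw [Finset.prod_congr rfl step2,
    Finset.prod_range_reflect (fun m => ∑ c ∈ Finset.range (m + 1), gf m c) n]
  have factor : ∀ m : ℕ, (∑ c ∈ Finset.range (m+1), gf m c)
      = ((1 + q ^ (2*(m+1) - 1)) / (1+q)) * ((q ^ (2*(m+1)) - 1) / (q-1)) := by
    intro m
    rw [hgf]
    rw [Finset.sum_add_distrib]
    have eA : ∑ c ∈ Finset.range (m+1), q ^ ((1 + 4*(m - c)) + 2*c)
        = q^(2*m+1) * ∑ c ∈ Finset.range (m+1), (q^2)^c := by
      have p1 : ∀ c ∈ Finset.range (m+1), q ^ ((1 + 4*(m - c)) + 2*c)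
          = (fun c' => q^(2*m+1) * (q^2)^c') (m - c) := by
        intro c hc
        have hcm : c ≤ m := by simp at hc; omega
        simp only
        rw [← pow_mul, ← pow_add]
        congr 1
        omega
      rw [Finset.sum_congr rfl p1]
      have := Finset.sum_range_reflect (fun c' => q^(2*m+1) * (q^2)^c') (m+1)
      simp only [Nat.add_sub_cancel] at this
      rw [this, Finset.mul_sum]
    have eB : ∑ c ∈ Finset.range (m+1), q ^ (2*c)
        = ∑ c ∈ Finset.range (m+1), (q^2)^c :=
      Finset.sum_congr rfl fun c _ => by rw [pow_mul]
    rw [eA, eB, geom_sum_eq hq2 (m+1)]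
    have h3 : 2*(m+1) - 1 = 2*m+1 := by omega
    have h4 : q ^ (2*(m+1)) = (q^2)^(m+1) := by rw [pow_mul]
    rw [h3, h4]
    field_simp
    ring
  have step3 : ∀ k ∈ Finset.range n, (∑ c ∈ Finset.range (k+1), gf k c)
      = ((1 + q ^ (2*(1+k) - 1)) / (1+q)) * ((q ^ (2*(1+k)) - 1) / (q-1)) := by
    intro k _
    rw [factor k, add_comm 1 k]
  rw [Finset.prod_congr rfl step3]
  rw [← Finset.Ico_add_one_right_eq_Icc, Finset.prod_Ico_eq_prod_range]
  norm_num
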